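/- For every k ≥ 1 there exist two distinct partitions of n = k²+2k−1 with identical sets of k-deletions; hence the bound n ≥ k²+2k in the reconstruction theorem is sharp. -/
import Mathlib


/-- A partition: a nonincreasing sequence of naturals (rows indexed from 0),
with finitely many nonzero parts. -/
def IsPartition (f : ℕ → ℕ) : Prop :=
  (∀ ⦃i j : ℕ⦄, i ≤ j → f j ≤ f i) ∧ {i | f i ≠ 0}.Finite

/-- The number of cells of a partition. -/
noncomputable def psize (f : ℕ → ℕ) : ℕ := ∑ᶠ i, f i

/-- `δ` is a `k`-deletion of `f`: a partition contained in `f` with `k` fewer cells. -/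
def IsDeletion (k : ℕ) (δ f : ℕ → ℕ) : Prop :=
  IsPartition δ ∧ (∀ i, δ i ≤ f i) ∧ psize f = psize δ + k

/-- The conjugate: `conj f c` is the number of cells in (0-indexed) column `c`. -/
noncomputable def conj (f : ℕ → ℕ) (c : ℕ) : ℕ := Set.ncard {i | c < f i}

lemma psize_eq_sum (f : ℕ → ℕ) (n : ℕ) (h : ∀ i, n ≤ i → f i = 0) :
    psize f = ∑ i ∈ Finset.range n, f i := by
  apply finsum_eq_sum_of_support_subset
  intro i hi
  simp only [Function.mem_support] at hi
  simp only [Finset.coe_range, Set.mem_Iio]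
  by_contra hle
  exact hi (h i (le_of_not_gt hle))

lemma fin_of_bound (f : ℕ → ℕ) (n : ℕ) (h : ∀ i, n ≤ i → f i = 0) :
    {i | f i ≠ 0}.Finite := by
  apply (Set.finite_Iio n).subset
  intro i hi
  simp only [Set.mem_setOf_eq] at hi
  simp only [Set.mem_Iio]
  by_contra hle
  exact hi (h i (le_of_not_gt hle))

theorem bound_sharp (k : ℕ) (hk : 1 ≤ k) :
    ∃ f g : ℕ → ℕ, IsPartition f ∧ IsPartition g ∧ f ≠ g ∧
      psize f = k ^ 2 + 2 * k - 1 ∧ psize g = k ^ 2 + 2 * k - 1 ∧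
      (∀ δ : ℕ → ℕ, IsDeletion k δ f ↔ IsDeletion k δ g) := by
  obtain ⟨j, rfl⟩ : ∃ j, k = j + 1 := ⟨k - 1, by omega⟩
  set f : ℕ → ℕ := fun i => if i < j + 1 then j + 2 else if i = j + 1 then j else 0 with hf
  set g : ℕ → ℕ := fun i => if i < j then j + 2 else if i ≤ j + 1 then j + 1 else 0 with hg
  have hf0 : ∀ i, j + 2 ≤ i → f i = 0 := by intro i hi; simp only [hf]; split_ifs <;> omega
  have hg0 : ∀ i, j + 2 ≤ i → g i = 0 := by intro i hi; simp only [hg]; split_ifs <;> omega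
  have hfp : IsPartition f := by
    constructor
    · intro a b hab; simp only [hf]; split_ifs <;> omega
    · exact fin_of_bound f (j + 2) hf0
  have hgp : IsPartition g := by
    constructor
    · intro a b hab; simp only [hg]; split_ifs <;> omega
    · exact fin_of_bound g (j + 2) hg0
  have hsq : (j + 1) ^ 2 + 2 * (j + 1) - 1 = j * j + 4 * j + 2 := by ring_nf; omega
  have hfs : psize f = j * j + 4 * j + 2 := by
    rw [psize_eq_sum f (j + 2) hf0, Finset.sum_range_succ, Finset.sum_range_succ]
    have h1 : ∀ i ∈ Finset.range j, f i = j + 2 := by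
      intro i hi; simp only [Finset.mem_range] at hi; simp only [hf]; split_ifs <;> omega
    rw [Finset.sum_congr rfl h1, Finset.sum_const, Finset.card_range]
    have : f j = j + 2 := by simp only [hf]; split_ifs <;> omega
    have h2 : f (j + 1) = j := by simp only [hf]; split_ifs <;> omega
    rw [this, h2, smul_eq_mul]
    have : j * (j + 2) = j * j + 2 * j := by ring
    omega
  have hgs : psize g = j * j + 4 * j + 2 := by
    rw [psize_eq_sum g (j + 2) hg0, Finset.sum_range_succ, Finset.sum_range_succ]
    have h1 : ∀ i ∈ Finset.range j, g i = j + 2 := by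
      intro i hi; simp only [Finset.mem_range] at hi; simp only [hg]; split_ifs <;> omega
    rw [Finset.sum_congr rfl h1, Finset.sum_const, Finset.card_range]
    have h2 : g j = j + 1 := by simp only [hg]; split_ifs <;> omega
    have h3 : g (j + 1) = j + 1 := by simp only [hg]; split_ifs <;> omega
    rw [h2, h3, smul_eq_mul]
    have : j * (j + 2) = j * j + 2 * j := by ring
    omega
  refine ⟨f, g, hfp, hgp, ?_, by omega, by omega, ?_⟩
  · intro h
    have := congrFun h (j + 1)
    simp only [hf, hg] at this
    split_ifs at this <;> omega
  intro δ
  constructor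
  · rintro ⟨hδp, hle, hs⟩
    refine ⟨hδp, ?_, by omega⟩
    have hδ0 : ∀ i, j + 2 ≤ i → δ i = 0 := fun i hi => by
      have := hle i; rw [hf0 i hi] at this; omega
    have hδs : psize δ = j * j + 3 * j + 1 := by omega
    have hδsum : ∑ i ∈ Finset.range (j + 2), δ i = j * j + 3 * j + 1 := by
      rw [← psize_eq_sum δ (j + 2) hδ0]; exact hδs
    -- key: δ j ≤ j + 1
    have hkey : δ j ≤ j + 1 := by
      by_contra hc
      push_neg at hc
      have hlow : ∀ i ∈ Finset.range (j + 1), j + 2 ≤ δ i := by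
        intro i hi; simp only [Finset.mem_range] at hi
        exact le_trans hc (hδp.1 (by omega))
      have h1 : (j + 1) * (j + 2) ≤ ∑ i ∈ Finset.range (j + 1), δ i := by
        calc (j + 1) * (j + 2) = ∑ _i ∈ Finset.range (j + 1), (j + 2) := by
              rw [Finset.sum_const, Finset.card_range, smul_eq_mul]
          _ ≤ _ := Finset.sum_le_sum hlow
      have h2 : ∑ i ∈ Finset.range (j + 1), δ i ≤ ∑ i ∈ Finset.range (j + 2), δ i :=
        Finset.sum_le_sum_of_subset (by simp)
      have : (j + 1) * (j + 2) = j * j + 3 * j + 2 := by ring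
      omega
    intro i
    simp only [hg]
    split_ifs with h1 h2
    · have := hle i; simp only [hf] at this; split_ifs at this <;> omega
    · -- j ≤ i ≤ j + 1
      exact le_trans (hδp.1 (by omega : j ≤ i)) hkey
    · have := hle i; rw [hf0 i (by omega)] at this; omega
  · rintro ⟨hδp, hle, hs⟩
    refine ⟨hδp, ?_, by omega⟩
    have hδ0 : ∀ i, j + 2 ≤ i → δ i = 0 := fun i hi => by
      have := hle i; rw [hg0 i hi] at this; omega
    have hδs : psize δ = j * j + 3 * j + 1 := by omega
    have hδsum : ∑ i ∈ Finset.range (j + 2), δ i = j * j + 3 * j + 1 := by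
      rw [← psize_eq_sum δ (j + 2) hδ0]; exact hδs
    -- key: δ (j+1) ≤ j
    have hkey : δ (j + 1) ≤ j := by
      by_contra hc
      push_neg at hc
      have hlow : ∀ i ∈ Finset.range (j + 2), j + 1 ≤ δ i := by
        intro i hi; simp only [Finset.mem_range] at hi
        exact le_trans hc (hδp.1 (by omega))
      have h1 : (j + 2) * (j + 1) ≤ ∑ i ∈ Finset.range (j + 2), δ i := by
        calc (j + 2) * (j + 1) = ∑ _i ∈ Finset.range (j + 2), (j + 1) := by
              rw [Finset.sum_const, Finset.card_range, smul_eq_mul]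
          _ ≤ _ := Finset.sum_le_sum hlow
      have : (j + 2) * (j + 1) = j * j + 3 * j + 2 := by ring
      omega
    intro i
    simp only [hf]
    split_ifs with h1 h2
    · have := hle i; simp only [hg] at this; split_ifs at this <;> omega
    · rw [h2]; exact hkey
    · have := hle i; rw [hg0 i (by omega)] at this; omega
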